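/- Let L ⊆ K be a dual face. Then the closure of the set of functions {u ↦ ν_L(p−u) − ν_L(p) : p ∈ V} in the space of real-valued functions on V with the topology of uniform convergence on bounded subsets of V equals the union, over all dual faces L' ⊆ K with L' ⊆ L, of the sets {u ↦ ν_{L'}(p−u) − ν_{L'}(p) : p ∈ V}. -/

import Mathlib

open Bornology

/-- The polyhedral asymmetric norm `ν(u) = max {ξ_k(u) : k ∈ K}`. -/
noncomputable def nu {V : Type*} [AddCommGroup V] [Module ℝ V] {m : ℕ}
    (ξ : Fin (m + 1) → V →ₗ[ℝ] ℝ) (u : V) : ℝ :=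
  Finset.univ.sup' Finset.univ_nonempty fun k => ξ k u

/-- `ν_L(u) = max {ξ_ℓ(u) : ℓ ∈ L}` (junk value `0` for `L = ∅`). -/
noncomputable def nuL {V : Type*} [AddCommGroup V] [Module ℝ V] {m : ℕ}
    (ξ : Fin (m + 1) → V →ₗ[ℝ] ℝ) (L : Finset (Fin (m + 1))) (u : V) : ℝ :=
  if h : L.Nonempty then L.sup' h fun ℓ => ξ ℓ u else 0

/-- `L ⊆ K` is a dual face if there is `v` with `ν(v) = 1` and `L = {k : ξ_k(v) = 1}`. -/
def IsDualFace {V : Type*} [AddCommGroup V] [Module ℝ V] {m : ℕ}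
    (ξ : Fin (m + 1) → V →ₗ[ℝ] ℝ) (L : Finset (Fin (m + 1))) : Prop :=
  ∃ v : V, nu ξ v = 1 ∧ ∀ k, k ∈ L ↔ ξ k v = 1

/-- `H_L = {u : ξ_k(u) = ξ_ℓ(u) for all k, ℓ ∈ L}`. -/
def HL {V : Type*} [AddCommGroup V] [Module ℝ V] {m : ℕ}
    (ξ : Fin (m + 1) → V →ₗ[ℝ] ℝ) (L : Finset (Fin (m + 1))) : Set V :=
  {u : V | ∀ k ∈ L, ∀ l ∈ L, ξ k u = ξ l u}

open Filter Set Topology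
set_option linter.unusedSectionVars false
set_option linter.unusedVariables false
set_option maxHeartbeats 1000000

section Aux

variable {V : Type*} [NormedAddCommGroup V] [InnerProductSpace ℝ V] [FiniteDimensional ℝ V]
  {m : ℕ}

theorem memClosureUOF {S : Set (V → ℝ)} {g : V → ℝ} :
    UniformOnFun.ofFun {s : Set V | IsBounded s} g ∈
      closure (UniformOnFun.ofFun {s : Set V | IsBounded s} '' S) ↔
    ∀ s : Set V, IsBounded s → ∀ ε : ℝ, 0 < ε → ∃ f ∈ S, ∀ x ∈ s, |f x - g x| < ε := by
  have hne : {s : Set V | IsBounded s}.Nonempty := ⟨∅, Bornology.isBounded_empty⟩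
  have hdir : DirectedOn (· ⊆ ·) {s : Set V | IsBounded s} := fun s hs t ht =>
    ⟨s ∪ t, hs.union ht, Set.subset_union_left, Set.subset_union_right⟩
  rw [mem_closure_iff_nhds_basis
    (UniformOnFun.hasBasis_nhds_of_basis V ℝ _ _ hne hdir Metric.uniformity_basis_dist)]
  constructor
  · intro H s hs ε hε
    obtain ⟨y, ⟨f, hfS, rfl⟩, hy⟩ := H (s, ε) ⟨hs, hε⟩
    refine ⟨f, hfS, fun x hx => ?_⟩
    have := hy x hx
    simpa [Real.dist_eq] using this
  · rintro H ⟨s, ε⟩ ⟨hs, hε⟩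
    obtain ⟨f, hfS, hf⟩ := H s hs ε hε
    refine ⟨UniformOnFun.ofFun _ f, ⟨f, hfS, rfl⟩, fun x hx => ?_⟩
    simpa [Real.dist_eq] using hf x hx

theorem abs_sup'_sub_sup'_le {ι : Type*} (s : Finset ι) (hs : s.Nonempty) (x y : ι → ℝ) :
    |s.sup' hs x - s.sup' hs y| ≤ s.sup' hs fun i => |x i - y i| := by
  rw [abs_sub_le_iff]
  constructor
  · rw [sub_le_iff_le_add]
    refine Finset.sup'_le _ _ fun i hi => ?_
    have h1 : x i ≤ |x i - y i| + y i := by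
      have := le_abs_self (x i - y i); linarith
    exact h1.trans (add_le_add (Finset.le_sup' (fun i => |x i - y i|) hi)
      (Finset.le_sup' y hi))
  · rw [sub_le_iff_le_add]
    refine Finset.sup'_le _ _ fun i hi => ?_
    have h1 : y i ≤ |x i - y i| + x i := by
      have := neg_abs_le (x i - y i); linarith
    exact h1.trans (add_le_add (Finset.le_sup' (fun i => |x i - y i|) hi)
      (Finset.le_sup' x hi))

theorem tendsto_finset_sup' {ι : Type*} (s : Finset ι) (hs : s.Nonempty) (F : ℕ → ι → ℝ)
    (f : ι → ℝ) (h : ∀ i ∈ s, Tendsto (fun n => F n i) atTop (𝓝 (f i))) :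
    Tendsto (fun n => s.sup' hs (F n)) atTop (𝓝 (s.sup' hs f)) := by
  rw [Metric.tendsto_atTop]
  intro ε hε
  have H : ∀ᶠ n in atTop, ∀ i ∈ s, dist (F n i) (f i) < ε :=
    (Finset.eventually_all s).2 fun i hi =>
      (h i hi).eventually (Metric.ball_mem_nhds (f i) hε)
  have H2 : ∀ᶠ n in atTop, dist (s.sup' hs (F n)) (s.sup' hs f) < ε := by
    refine H.mono fun n hn => ?_
    simp only [Metric.mem_ball, Real.dist_eq] at hn ⊢
    refine lt_of_le_of_lt (abs_sup'_sub_sup'_le s hs (F n) f) ?_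
    exact (Finset.sup'_lt_iff hs).2 hn
  exact eventually_atTop.1 H2


theorem nuL_eq (ξ : Fin (m + 1) → V →ₗ[ℝ] ℝ) {L : Finset (Fin (m + 1))} (h : L.Nonempty)
    (u : V) : nuL ξ L u = L.sup' h fun ℓ => ξ ℓ u := dif_pos h

theorem isDualFace_of_sep (ξ : Fin (m + 1) → V →ₗ[ℝ] ℝ) {L L' : Finset (Fin (m + 1))}
    (hsub : L' ⊆ L) (hL'ne : L'.Nonempty) (vL : V) (hvL : nu ξ vL = 1)
    (hvLiff : ∀ k, k ∈ L ↔ ξ k vL = 1) (w : V) (hw0 : ∀ k ∈ L', ξ k w = 0)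
    (hwneg : ∀ j ∈ L, j ∉ L' → ξ j w < 0) : IsDualFace ξ L' := by
  classical
  have hle1 : ∀ k, ξ k vL ≤ 1 := by
    intro k
    have h := Finset.le_sup' (fun k => ξ k vL) (Finset.mem_univ k)
    have h2 : nu ξ vL = Finset.univ.sup' Finset.univ_nonempty fun k => ξ k vL := rfl
    rw [h2] at hvL
    simpa [hvL] using h
  have hlt1 : ∀ k, k ∉ L → ξ k vL < 1 := fun k hk =>
    lt_of_le_of_ne (hle1 k) (fun h => hk ((hvLiff k).2 h))
  set τ : Fin (m + 1) → ℝ := fun k =>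
    if h : k ∉ L ∧ 0 < ξ k w then (1 - ξ k vL) / (2 * ξ k w) else 1 with hτ
  have hτpos : ∀ k, 0 < τ k := by
    intro k
    simp only [hτ]
    split
    · rename_i h
      exact div_pos (by linarith [hlt1 k h.1]) (by linarith [h.2])
    · exact one_pos
  set t : ℝ := Finset.univ.inf' Finset.univ_nonempty τ with ht
  have htpos : 0 < t := (Finset.lt_inf'_iff _).2 fun k _ => hτpos k
  have hval : ∀ k, ξ k (vL + t • w) = ξ k vL + t * ξ k w := by
    intro k; simp [map_add, map_smul, smul_eq_mul]
  have hL'val : ∀ k ∈ L', ξ k (vL + t • w) = 1 := by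
    intro k hk
    rw [hval, hw0 k hk, (hvLiff k).1 (hsub hk)]; ring
  have hlt : ∀ k, k ∉ L' → ξ k (vL + t • w) < 1 := by
    intro k hk
    rw [hval]
    by_cases hkl : k ∈ L
    · have := hwneg k hkl hk
      have h1 := (hvLiff k).1 hkl
      nlinarith
    · have h1 := hlt1 k hkl
      by_cases hw : 0 < ξ k w
      · have htle : t ≤ τ k := Finset.inf'_le τ (Finset.mem_univ k)
        have : τ k = (1 - ξ k vL) / (2 * ξ k w) := by
          simp only [hτ]; rw [dif_pos ⟨hkl, hw⟩]
        rw [this] at htle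
        have h2 : t * ξ k w ≤ (1 - ξ k vL) / 2 := by
          rw [le_div_iff₀ (by linarith : (0:ℝ) < 2 * ξ k w)] at htle
          nlinarith
        linarith
      · push_neg at hw
        nlinarith
  refine ⟨vL + t • w, ?_, fun k => ⟨fun hk => hL'val k hk, fun h => ?_⟩⟩
  · obtain ⟨k₀, hk₀⟩ := hL'ne
    refine le_antisymm (Finset.sup'_le _ _ fun k _ => ?_) ?_
    · by_cases hk : k ∈ L'
      · exact le_of_eq (hL'val k hk)
      · exact le_of_lt (hlt k hk)
    · rw [← hL'val k₀ hk₀]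
      exact Finset.le_sup' (fun k => ξ k (vL + t • w)) (Finset.mem_univ k₀)
  · by_contra hk
    exact absurd h (ne_of_lt (hlt k hk))

theorem shift_lemma (ξ : Fin (m + 1) → V →ₗ[ℝ] ℝ) {L L' : Finset (Fin (m + 1))}
    (hL'ne : L'.Nonempty) (hsub : L' ⊆ L) (v' : V)
    (hv1 : ∀ k ∈ L', ξ k v' = 1) (hvlt : ∀ k ∈ L, k ∉ L' → ξ k v' < 1)
    (p : V) {s : Set V} (hs : Bornology.IsBounded s) :
    ∃ q : V, ∀ u ∈ insert (0 : V) s,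
      nuL ξ L (q - u) = nuL ξ L (q - p) + nuL ξ L' (p - u) := by
  classical
  have hLne : L.Nonempty := hL'ne.mono hsub
  by_cases hJ : (L \ L').Nonempty
  · -- main case
    obtain ⟨R, hR⟩ := (isBounded_iff_forall_norm_le.1 (hs.insert 0))
    set C : ℝ := Finset.univ.sup' Finset.univ_nonempty
      (fun k => ‖LinearMap.toContinuousLinearMap (ξ k)‖) with hC
    set M : ℝ := C * (‖p‖ + R) + 1 with hM
    have hRpos : 0 ≤ R := le_trans (norm_nonneg _) (hR 0 (Set.mem_insert 0 s))
    have hbound : ∀ k, ∀ u ∈ insert (0 : V) s, |ξ k (p - u)| ≤ M := by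
      intro k u hu
      have h1 : |ξ k (p - u)| ≤ ‖LinearMap.toContinuousLinearMap (ξ k)‖ * ‖p - u‖ := by
        have := (LinearMap.toContinuousLinearMap (ξ k)).le_opNorm (p - u)
        simpa [Real.norm_eq_abs] using this
      have h2 : ‖LinearMap.toContinuousLinearMap (ξ k)‖ ≤ C :=
        Finset.le_sup' (fun k => ‖LinearMap.toContinuousLinearMap (ξ k)‖) (Finset.mem_univ k)
      have h3 : ‖p - u‖ ≤ ‖p‖ + R := by
        refine (norm_sub_le p u).trans ?_
        exact add_le_add (le_refl _) (hR u hu)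
      have h4 : ‖LinearMap.toContinuousLinearMap (ξ k)‖ * ‖p - u‖ ≤ C * (‖p‖ + R) := by
        apply mul_le_mul h2 h3 (norm_nonneg _)
        exact le_trans (norm_nonneg _) h2
      rw [hM]; linarith
    have hC0 : (0:ℝ) ≤ C := le_trans (norm_nonneg (LinearMap.toContinuousLinearMap (ξ 0)))
      (Finset.le_sup' (fun k => ‖LinearMap.toContinuousLinearMap (ξ k)‖) (Finset.mem_univ 0))
    have hMpos : 0 < M := by nlinarith [norm_nonneg p]
    set δ : ℝ := (L \ L').inf' hJ (fun j => 1 - ξ j v') with hδ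
    have hδpos : 0 < δ := by
      refine (Finset.lt_inf'_iff _).2 fun j hj => ?_
      rw [Finset.mem_sdiff] at hj
      linarith [hvlt j hj.1 hj.2]
    set t : ℝ := (2 * M + 1) / δ with htdef
    have htpos : 0 < t := div_pos (by linarith) hδpos
    have htδ : t * δ = 2 * M + 1 := div_mul_cancel₀ _ (ne_of_gt hδpos)
    refine ⟨p + t • v', ?_⟩
    have key : ∀ u : V, u ∈ insert (0 : V) s →
        nuL ξ L (p + t • v' - u) = t + nuL ξ L' (p - u) := by
      intro u hu
      rw [nuL_eq ξ hLne, nuL_eq ξ hL'ne]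
      have hval : ∀ k, ξ k (p + t • v' - u) = ξ k (p - u) + t * ξ k v' := by
        intro k
        have : p + t • v' - u = (p - u) + t • v' := by abel
        rw [this]; simp [map_add, map_smul, smul_eq_mul]
      refine le_antisymm (Finset.sup'_le _ _ fun k hk => ?_) ?_
      · rw [hval]
        by_cases hk' : k ∈ L'
        · rw [hv1 k hk']
          have := Finset.le_sup' (fun k => ξ k (p - u)) hk'
          linarith
        · have hδle : δ ≤ 1 - ξ k v' :=
            Finset.inf'_le _ (Finset.mem_sdiff.2 ⟨hk, hk'⟩)
          have h1 : t * ξ k v' ≤ t * (1 - δ) :=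
            mul_le_mul_of_nonneg_left (by linarith) (le_of_lt htpos)
          obtain ⟨k₀, hk₀⟩ := hL'ne
          have h2 : -M ≤ ξ k₀ (p - u) := by
            have := hbound k₀ u hu
            have := neg_abs_le (ξ k₀ (p - u))
            linarith
          have h3 := Finset.le_sup' (fun k => ξ k (p - u)) hk₀
          have h4 := hbound k u hu
          have h5 := le_abs_self (ξ k (p - u))
          have : t * (1 - δ) = t - (2 * M + 1) := by rw [mul_sub, htδ]; ring
          linarith
      · obtain ⟨k₁, hk₁, hk₁eq⟩ := Finset.exists_mem_eq_sup' hL'ne (fun k => ξ k (p - u))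
        rw [hk₁eq]
        have : ξ k₁ (p - u) + t = ξ k₁ (p + t • v' - u) := by
          rw [hval, hv1 k₁ hk₁]; ring
        rw [add_comm t]
        rw [this]
        exact Finset.le_sup' (fun k => ξ k (p + t • v' - u)) (hsub hk₁)
    intro u hu
    have h1 := key u hu
    have h2 : nuL ξ L (p + t • v' - p) = t := by
      have : p + t • v' - p = t • v' := by abel
      rw [this, nuL_eq ξ hLne]
      obtain ⟨k₀, hk₀⟩ := hL'ne
      refine le_antisymm (Finset.sup'_le _ _ fun k hk => ?_) ?_
      · simp only [map_smul, smul_eq_mul]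
        by_cases hk' : k ∈ L'
        · rw [hv1 k hk']; linarith
        · have := hvlt k hk hk'
          nlinarith
      · have h5 : ξ k₀ (t • v') ≤ L.sup' hLne fun k => ξ k (t • v') :=
          Finset.le_sup' (fun k => ξ k (t • v')) (hsub hk₀)
        have h6 : ξ k₀ (t • v') = t := by
          simp only [map_smul, smul_eq_mul]; rw [hv1 k₀ hk₀]; ring
        rw [h6] at h5; exact h5
    rw [h1, h2]
  · -- L = L'
    have hLL : L = L' := by
      rw [Finset.not_nonempty_iff_eq_empty, Finset.sdiff_eq_empty_iff_subset] at hJ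
      exact le_antisymm hJ hsub
    subst hLL
    refine ⟨p, fun u hu => ?_⟩
    have : nuL ξ L (p - p) = 0 := by
      rw [sub_self, nuL_eq ξ hLne]
      obtain ⟨k₀, hk₀⟩ := hLne
      refine le_antisymm (Finset.sup'_le _ _ fun k hk => by simp) ?_
      · have : ξ k₀ (0 : V) = 0 := by simp
        rw [← this]
        exact Finset.le_sup' (fun k => ξ k (0 : V)) hk₀
    rw [this, zero_add]


theorem exists_sep (ξ : Fin (m + 1) → V →ₗ[ℝ] ℝ) (L L' : Finset (Fin (m + 1)))
    (hsub : L' ⊆ L) (r : ℕ → V) (h' : Fin (m + 1) → ℝ)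
    (hbdd : ∀ k ∈ L', Tendsto (fun n => ξ k (r n)) atTop (𝓝 (h' k)))
    (hneg : ∀ j ∈ L, j ∉ L' → ∀ n, ξ j (r n) ≤ 0)
    (hbot : ∀ j ∈ L, j ∉ L' → Tendsto (fun n => ξ j (r n)) atTop atBot) :
    ∃ w : V, (∀ k ∈ L', ξ k w = 0) ∧ ∀ j ∈ L, j ∉ L' → ξ j w < 0 := by
  classical
  by_cases hJne : (L \ L').Nonempty
  swap
  · refine ⟨0, fun k _ => by simp, fun j hj hj' => ?_⟩
    exact absurd ⟨j, Finset.mem_sdiff.2 ⟨hj, hj'⟩⟩ hJne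
  by_contra hno
  push_neg at hno
  set J : Finset (Fin (m + 1)) := L \ L' with hJdef
  set ψ : V →ₗ[ℝ] (Fin (m + 1) → ℝ) :=
    LinearMap.pi (fun k => if k ∈ L' then ξ k else 0) with hψdef
  set φ : V →ₗ[ℝ] (Fin (m + 1) → ℝ) :=
    LinearMap.pi (fun k => if k ∈ J then ξ k else 0) with hφdef
  have hψ0 : ∀ w : V, ψ w = 0 → ∀ k ∈ L', ξ k w = 0 := by
    intro w hw k hk
    have := congrFun hw k
    simpa [hψdef, LinearMap.pi_apply, if_pos hk] using this
  have hψ0' : ∀ w : V, (∀ k ∈ L', ξ k w = 0) → ψ w = 0 := by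
    intro w hw
    funext k
    by_cases hk : k ∈ L' <;> simp [hψdef, LinearMap.pi_apply, hk, hw]
  have hφval : ∀ (w : V) (j : Fin (m + 1)), j ∈ J → φ w j = ξ j w := by
    intro w j hj
    simp [hφdef, LinearMap.pi_apply, if_pos hj]
  set S : Set (Fin (m + 1) → ℝ) := ↑((LinearMap.ker ψ).map φ) with hSdef
  set O : Set (Fin (m + 1) → ℝ) := {x | ∀ j ∈ J, x j < 0} with hOdef
  have hOeq : O = ⋂ j ∈ J, {x : Fin (m + 1) → ℝ | x j < 0} := by
    ext x; simp [hOdef]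
  have hevlin : ∀ j : Fin (m + 1), IsLinearMap ℝ (fun x : Fin (m + 1) → ℝ => x j) :=
    fun j => ⟨fun x y => rfl, fun c x => rfl⟩
  have hOopen : IsOpen O := by
    rw [hOeq]
    exact isOpen_biInter_finset fun j _ =>
      isOpen_lt (continuous_apply j) continuous_const
  have hOconv : Convex ℝ O := by
    rw [hOeq]
    exact convex_iInter₂ fun j _ => convex_halfSpace_lt (hevlin j) 0
  have hSconv : Convex ℝ S := ((LinearMap.ker ψ).map φ).convex
  have hdisj : Disjoint O S := by
    rw [Set.disjoint_left]
    rintro x hxO ⟨w, hwker, rfl⟩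
    obtain ⟨j, hjL, hjL', hge⟩ := hno w (hψ0 w (LinearMap.mem_ker.1 hwker))
    have hj : j ∈ J := Finset.mem_sdiff.2 ⟨hjL, hjL'⟩
    have := hxO j hj
    rw [hφval w j hj] at this
    linarith
  obtain ⟨F, c, hFO, hFS⟩ := geometric_hahn_banach_open hOconv hOopen hSconv hdisj
  have hFS0 : ∀ y ∈ S, F y = 0 := by
    intro y hy
    by_contra hFy
    have hsm : ∀ t : ℝ, c ≤ F (t • y) := fun t =>
      hFS _ (((LinearMap.ker ψ).map φ).smul_mem t hy)
    have := hsm ((c - 1) / F y)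
    rw [map_smul, smul_eq_mul, div_mul_cancel₀ _ hFy] at this
    linarith
  have hc0 : c ≤ 0 := by
    have := hFS 0 (((LinearMap.ker ψ).map φ).zero_mem)
    simpa using this
  set lam : Fin (m + 1) → ℝ := fun k => F (Pi.single k 1) with hlam
  have hFx : ∀ x : Fin (m + 1) → ℝ, F x = ∑ k, x k * lam k := by
    intro x
    have hx := pi_eq_sum_univ x
    have hsingle : ∀ i : Fin (m + 1),
        (fun j => if i = j then (1:ℝ) else 0) = Pi.single i 1 := by
      intro i; funext j; rw [Pi.single_apply]; exact if_congr eq_comm rfl rfl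
    conv_lhs => rw [hx]
    rw [map_sum]
    congr 1
    funext i
    rw [map_smul, smul_eq_mul, hsingle i]
  set oneJ : Fin (m + 1) → ℝ := fun k => if k ∈ J then 1 else 0 with honeJ
  have hlam_nn : ∀ j ∈ J, 0 ≤ lam j := by
    intro j hj
    have key : ∀ ε : ℝ, 0 < ε → lam j > -ε * F oneJ := by
      intro ε hε
      set xε : Fin (m + 1) → ℝ := (-ε) • oneJ - Pi.single j 1 with hxε
      have hxεO : xε ∈ O := by
        intro j' hj'
        have h1 : (0:ℝ) ≤ (Pi.single j (1:ℝ) : Fin (m + 1) → ℝ) j' := by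
          rw [Pi.single_apply]; split <;> norm_num
        simp only [hxε, Pi.sub_apply, Pi.smul_apply, honeJ, if_pos hj', smul_eq_mul]
        nlinarith
      have := hFO xε hxεO
      rw [hxε, map_sub, map_smul, smul_eq_mul] at this
      have : -ε * F oneJ - lam j < 0 := by
        have := hc0; simp only [hlam]; linarith
      linarith
    by_contra hneg'
    push_neg at hneg'
    rcases le_or_gt (F oneJ) 0 with hB0 | hB0
    · have := key 1 one_pos
      nlinarith
    · have hε : 0 < -lam j / (2 * F oneJ) := div_pos (by linarith) (by linarith)
      have hk2 := key _ hε
      rw [neg_div, neg_neg, div_mul_eq_mul_div] at hk2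
      have heq2 : lam j * F oneJ / (2 * F oneJ) = lam j / 2 := by
        field_simp
      rw [heq2] at hk2
      linarith
  have hexj : ∃ j₀ ∈ J, 0 < lam j₀ := by
    by_contra hall
    push_neg at hall
    have hz : ∀ j ∈ J, lam j = 0 := fun j hj => le_antisymm (hall j hj) (hlam_nn j hj)
    have hO1 : -oneJ ∈ O := by
      intro j hj
      simp [honeJ, if_pos hj]
    have hF1 : F (-oneJ) < c := hFO _ hO1
    have : F (-oneJ) = -∑ j ∈ J, lam j := by
      rw [map_neg, hFx]
      congr 1
      rw [← Finset.sum_subset (Finset.subset_univ J)]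
      · exact Finset.sum_congr rfl fun k hk => by simp [honeJ, if_pos hk]
      · intro k _ hk
        simp [honeJ, if_neg hk]
    rw [this, Finset.sum_congr rfl hz] at hF1
    simp at hF1
    linarith
  obtain ⟨j₀, hj₀J, hj₀pos⟩ := hexj
  set Glin : V →ₗ[ℝ] ℝ := ∑ j ∈ J, lam j • ξ j with hGlin
  have hGval : ∀ w : V, Glin w = ∑ j ∈ J, lam j * ξ j w := by
    intro w
    simp [hGlin, LinearMap.sum_apply, LinearMap.smul_apply, smul_eq_mul]
  have hGW : ∀ w : V, ψ w = 0 → Glin w = 0 := by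
    intro w hw
    have hmem : φ w ∈ S := ⟨w, LinearMap.mem_ker.2 hw, rfl⟩
    have h0 := hFS0 _ hmem
    rw [hFx] at h0
    have hzero : ∀ k ∈ Finset.univ, k ∉ J → φ w k * lam k = 0 := by
      intro k _ hk
      have : φ w k = 0 := by simp [hφdef, LinearMap.pi_apply, if_neg hk]
      rw [this, zero_mul]
    have hsum : ∑ k, φ w k * lam k = ∑ j ∈ J, lam j * ξ j w := by
      rw [← Finset.sum_subset (Finset.subset_univ J) hzero]
      exact Finset.sum_congr rfl fun k hk => by rw [hφval w k hk]; ring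
    rw [hGval, ← hsum, h0]
  -- `Glin (r n) → -∞`
  have hGr_le : ∀ n, Glin (r n) ≤ lam j₀ * ξ j₀ (r n) := by
    intro n
    rw [hGval]
    have hrest : ∑ j ∈ J.erase j₀, lam j * ξ j (r n) ≤ 0 :=
      Finset.sum_nonpos fun j hj => by
        have hjJ : j ∈ J := Finset.mem_of_mem_erase hj
        have h1 := hlam_nn j hjJ
        have h2 := hneg j (Finset.mem_sdiff.1 hjJ).1 (Finset.mem_sdiff.1 hjJ).2 n
        exact mul_nonpos_of_nonneg_of_nonpos h1 h2
    rw [← Finset.add_sum_erase J _ hj₀J]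
    linarith
  have hbot₀ : Tendsto (fun n => ξ j₀ (r n)) atTop atBot :=
    hbot j₀ (Finset.mem_sdiff.1 hj₀J).1 (Finset.mem_sdiff.1 hj₀J).2
  have hGbot : Tendsto (fun n => Glin (r n)) atTop atBot := by
    refine tendsto_atBot_mono hGr_le ?_
    exact (tendsto_const_mul_atBot_of_pos hj₀pos).2 hbot₀
  set hψ' : Fin (m + 1) → ℝ := fun k => if k ∈ L' then h' k else 0 with hψ'def
  have hψr : Tendsto (fun n => ψ (r n)) atTop (𝓝 hψ') := by
    rw [tendsto_pi_nhds]
    intro k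
    by_cases hk : k ∈ L'
    · have heq : (fun n => ψ (r n) k) = fun n => ξ k (r n) := by
        funext n; simp [hψdef, LinearMap.pi_apply, if_pos hk]
      rw [heq, hψ'def]; simp only [if_pos hk]; exact hbdd k hk
    · have heq : (fun n => ψ (r n) k) = fun n => (0:ℝ) := by
        funext n; simp [hψdef, LinearMap.pi_apply, if_neg hk]
      rw [heq, hψ'def]; simp only [if_neg hk]; exact tendsto_const_nhds
  set c' : ℕ → ℝ := fun n => (-(Glin (r n)))⁻¹ with hc'
  have hcn : Tendsto c' atTop (𝓝 0) := by
    apply Tendsto.inv_tendsto_atTop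
    exact tendsto_neg_atTop_iff.2 hGbot
  have h1 : Tendsto (fun n => c' n • ψ (r n)) atTop (𝓝 0) := by
    have := hcn.smul hψr
    simpa using this
  have hev : ∀ᶠ n in atTop, Glin (r n) ≤ -1 := hGbot.eventually (eventually_le_atBot (-1))
  have h2 : Tendsto (fun n => c' n * Glin (r n)) atTop (𝓝 (-1)) := by
    refine Tendsto.congr' ?_ (tendsto_const_nhds : Tendsto (fun _ : ℕ => (-1:ℝ)) atTop (𝓝 (-1)))
    refine hev.mono fun n hn => ?_
    have hne : Glin (r n) ≠ 0 := by linarith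
    simp only [hc']
    rw [inv_neg, neg_mul, inv_mul_cancel₀ hne]
  set χ : V →ₗ[ℝ] (Fin (m + 1) → ℝ) × ℝ := ψ.prod Glin with hχ
  have hclosed : IsClosed ((LinearMap.range χ : Submodule ℝ _) : Set ((Fin (m + 1) → ℝ) × ℝ)) :=
    Submodule.closed_of_finiteDimensional _
  have hmemr : ((0 : Fin (m + 1) → ℝ), (-1:ℝ)) ∈ LinearMap.range χ := by
    have htt : Tendsto (fun n => χ (c' n • r n)) atTop
        (𝓝 ((0 : Fin (m + 1) → ℝ), (-1:ℝ))) := by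
      have heq : (fun n => χ (c' n • r n)) = fun n => (c' n • ψ (r n), c' n * Glin (r n)) := by
        funext n
        simp [hχ, LinearMap.prod_apply, map_smul, smul_eq_mul]
      rw [heq]
      exact h1.prodMk_nhds h2
    exact hclosed.mem_of_tendsto htt (Eventually.of_forall fun n => ⟨c' n • r n, rfl⟩)
  obtain ⟨w, hw⟩ := hmemr
  have hw1 : ψ w = 0 := by
    have := congrArg Prod.fst hw
    simpa [hχ] using this
  have hw2 : Glin w = -1 := by
    have := congrArg Prod.snd hw
    simpa [hχ] using this
  rw [hGW w hw1] at hw2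
  norm_num at hw2


theorem nonpos_of_forall_lt_one_div (x : ℝ) (h : ∀ n : ℕ, x < 1 / (n + 1)) : x ≤ 0 := by
  by_contra hx
  push_neg at hx
  obtain ⟨n, hn⟩ := exists_nat_gt (1 / x)
  have h1 : 1 / (n + 1 : ℝ) < x := by
    rw [div_lt_iff₀ (by positivity)]
    rw [div_lt_iff₀ hx] at hn
    nlinarith
  exact absurd (h n) (not_lt.2 (le_of_lt h1))

theorem limit_structure (ξ : Fin (m + 1) → V →ₗ[ℝ] ℝ)
    (hfacet : ∀ k, ∃ u : V, ξ k u = 1 ∧ ∀ l, l ≠ k → ξ l u < 1)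
    (L : Finset (Fin (m + 1))) (vL : V) (hvL : nu ξ vL = 1)
    (hvLiff : ∀ k, k ∈ L ↔ ξ k vL = 1)
    (g : V → ℝ) (p : ℕ → V)
    (hp : ∀ n : ℕ, ∀ u : V, ‖u‖ ≤ (n : ℝ) →
      |(nuL ξ L (p n - u) - nuL ξ L (p n)) - g u| < 1 / (n + 1)) :
    ∃ L' : Finset (Fin (m + 1)), ∃ q : V, IsDualFace ξ L' ∧ L' ⊆ L ∧
      g = fun u => nuL ξ L' (q - u) - nuL ξ L' q := by
  classical
  have hLne : L.Nonempty := by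
    obtain ⟨k, _, hkeq⟩ := Finset.exists_mem_eq_sup'
      (Finset.univ_nonempty (α := Fin (m + 1))) (fun k => ξ k vL)
    exact ⟨k, (hvLiff k).2 (by rw [← hkeq]; exact hvL)⟩
  set fL : ℕ → V → ℝ := fun n u => nuL ξ L (p n - u) - nuL ξ L (p n) with hfLdef
  set a : ℕ → Fin (m + 1) → ℝ := fun n k => ξ k (p n) - nuL ξ L (p n) with hadef
  have hmaxsub : ∀ (c : ℝ) (f : Fin (m + 1) → ℝ),
      L.sup' hLne f - c = L.sup' hLne (fun k => f k - c) := by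
    intro c f
    exact Finset.comp_sup'_eq_sup'_comp hLne (fun x => x - c)
      (fun x y => by simp [max_sub_sub_right])
  have hfLval : ∀ n u, fL n u = L.sup' hLne (fun k => a n k - ξ k u) := by
    intro n u
    simp only [hfLdef, nuL_eq ξ hLne, hadef]
    rw [hmaxsub]
    exact Finset.sup'_congr hLne rfl fun k _ => by simp [map_sub]; ring
  have hsup0 : ∀ n, L.sup' hLne (a n) = 0 := by
    intro n
    simp only [hadef]
    rw [← hmaxsub, nuL_eq ξ hLne, sub_self]
  have hanonpos : ∀ n, ∀ k ∈ L, a n k ≤ 0 := by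
    intro n k hk
    have := Finset.le_sup' (a n) hk
    rw [hsup0 n] at this
    exact this
  have hfL0 : ∀ n, fL n 0 = 0 := by
    intro n; simp only [hfLdef]; rw [sub_zero, sub_self]
  have hg0 : g 0 = 0 := by
    have h1 : ∀ n : ℕ, |g 0| < 1 / (n + 1) := by
      intro n
      have := hp n 0 (by simp)
      rw [show nuL ξ L (p n - 0) - nuL ξ L (p n) = fL n 0 from rfl, hfL0 n] at this
      simpa [abs_sub_comm] using this
    have h2 := nonpos_of_forall_lt_one_div _ h1
    have := abs_nonneg (g 0)
    have : |g 0| = 0 := le_antisymm h2 this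
    exact abs_eq_zero.1 this
  have hone : Tendsto (fun n : ℕ => 1 / ((n : ℝ) + 1)) atTop (𝓝 0) :=
    tendsto_one_div_add_atTop_nhds_zero_nat
  have hptw : ∀ u, Tendsto (fun n => fL n u) atTop (𝓝 (g u)) := by
    intro u
    have hsq : Tendsto (fun n => fL n u - g u) atTop (𝓝 0) := by
      refine squeeze_zero_norm' ?_ hone
      filter_upwards [eventually_ge_atTop ⌈‖u‖⌉₊] with n hn
      have : ‖u‖ ≤ (n : ℝ) := le_trans (Nat.le_ceil _) (Nat.cast_le.2 hn)
      exact le_of_lt (by simpa [Real.norm_eq_abs] using hp n u this)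
    have := hsq.add (tendsto_const_nhds : Tendsto (fun _ : ℕ => g u) atTop (𝓝 (g u)))
    simpa using this
  have hp' : ∀ n : ℕ, ∀ u : V, ‖u‖ ≤ (n : ℝ) → |fL n u - g u| < 1 / ((n:ℝ) + 1) := hp
  have hrval0 : ∀ n, ∀ k ∈ L, ξ k (p n - (nuL ξ L (p n)) • vL) = a n k := by
    intro n k hk
    simp only [map_sub, map_smul, smul_eq_mul, hadef]
    rw [(hvLiff k).1 hk]
    ring
  clear_value fL a
  clear hfLdef hadef
  choose uk huk1 huklt using hfacet
  set δ : Fin (m + 1) → ℝ :=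
    fun k => L.inf' hLne (fun l => if l = k then 1 else 1 - ξ l (uk k)) with hδdef
  have hδpos : ∀ k, 0 < δ k := by
    intro k
    refine (Finset.lt_inf'_iff _).2 fun l _ => ?_
    by_cases hl : l = k
    · simp [hl]
    · simp only [if_neg hl]
      linarith [huklt k l hl]
  have hδle : ∀ k, ∀ l ∈ L, l ≠ k → ξ l (uk k) ≤ 1 - δ k := by
    intro k l hl hlk
    have := Finset.inf'_le (fun l => if l = k then (1:ℝ) else 1 - ξ l (uk k)) hl
    rw [if_neg hlk] at this
    linarith
  -- upper estimate
  have hub : ∀ k ∈ L, ∀ (u : V) (n : ℕ), ‖u‖ ≤ (n : ℝ) →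
      a n k < g u + ξ k u + 1 / ((n : ℝ) + 1) := by
    intro k hk u n hn
    have h1 : a n k - ξ k u ≤ fL n u := by
      rw [hfLval]
      exact Finset.le_sup' (fun k => a n k - ξ k u) hk
    have h2 := hp' n u hn
    rw [abs_sub_lt_iff] at h2
    have := h2.1
    linarith
  -- lower estimate
  have hlb : ∀ k ∈ L, ∀ (R : ℝ), 0 ≤ R → ∀ n : ℕ, R * ‖uk k‖ ≤ (n : ℝ) →
      g (-(R • uk k)) - R - 1 / ((n : ℝ) + 1) < max (a n k) (-(R * δ k)) := by
    intro k hk R hR n hn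
    have hnorm : ‖-(R • uk k)‖ ≤ (n : ℝ) := by
      rw [norm_neg, norm_smul, Real.norm_eq_abs, abs_of_nonneg hR]
      exact hn
    have h2 := hp' n (-(R • uk k)) hnorm
    rw [abs_sub_lt_iff] at h2
    have h3 := h2.2
    have h4 : fL n (-(R • uk k)) ≤ max (a n k + R) (R * (1 - δ k)) := by
      rw [hfLval]
      refine Finset.sup'_le _ _ fun l hl => ?_
      have hval : a n l - ξ l (-(R • uk k)) = a n l + R * ξ l (uk k) := by
        simp only [map_neg, map_smul, smul_eq_mul]; ring
      rw [hval]
      by_cases hlk : l = k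
      · subst hlk
        rw [huk1 l]
        exact le_max_of_le_left (by linarith)
      · refine le_max_of_le_right ?_
        have h5 := hδle k l hl hlk
        have h6 := hanonpos n l hl
        nlinarith
    have h7 : max (a n k + R) (R * (1 - δ k)) = max (a n k) (-(R * δ k)) + R := by
      rw [← max_add_add_right]
      congr 1
      ring
    rw [h7] at h4
    linarith
  set L' : Finset (Fin (m + 1)) :=
    L.filter (fun k => BddBelow (Set.range fun u => g u + ξ k u)) with hL'def
  have hsub : L' ⊆ L := Finset.filter_subset _ _
  set h : Fin (m + 1) → ℝ := fun k => ⨅ u : V, (g u + ξ k u) with hhdef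
  -- divergence for k ∉ L'
  have hbotL : ∀ j ∈ L, j ∉ L' → Tendsto (fun n => a n j) atTop atBot := by
    intro j hj hj'
    have hnb : ¬ BddBelow (Set.range fun u => g u + ξ j u) := by
      intro hb
      exact hj' (Finset.mem_filter.2 ⟨hj, hb⟩)
    rw [tendsto_atBot]
    intro M
    rw [not_bddBelow_iff] at hnb
    obtain ⟨x, ⟨u, rfl⟩, hu⟩ := hnb (M - 1)
    have hu' : g u + ξ j u < M - 1 := hu
    filter_upwards [eventually_ge_atTop ⌈‖u‖⌉₊] with n hn
    have hn' : ‖u‖ ≤ (n : ℝ) := le_trans (Nat.le_ceil _) (Nat.cast_le.2 hn)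
    have h1 := hub j hj u n hn'
    have h2 : 1 / ((n : ℝ) + 1) ≤ 1 := by
      rw [div_le_one (by positivity)]
      have : (0:ℝ) ≤ n := Nat.cast_nonneg n
      linarith
    linarith
  -- convergence for k ∈ L'
  have htendL : ∀ k ∈ L', Tendsto (fun n => a n k) atTop (𝓝 (h k)) := by
    intro k hk
    have hkL : k ∈ L := hsub hk
    have hbb : BddBelow (Set.range fun u => g u + ξ k u) :=
      (Finset.mem_filter.1 hk).2
    have hle : ∀ u, h k ≤ g u + ξ k u := fun u => ciInf_le hbb u
    rw [Metric.tendsto_atTop]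
    intro ε hε
    have hlt : h k < h k + ε / 2 := by linarith
    obtain ⟨u₀, hu₀⟩ := exists_lt_of_ciInf_lt hlt
    set R : ℝ := (|h k| + 1) / δ k with hRdef
    have hRpos : 0 < R := div_pos (by positivity) (hδpos k)
    have hRδ : R * δ k = |h k| + 1 := div_mul_cancel₀ _ (ne_of_gt (hδpos k))
    obtain ⟨N₀, hN₀⟩ := exists_nat_gt (max (R * ‖uk k‖) (2 / ε))
    refine ⟨max N₀ (max ⌈‖u₀‖⌉₊ 1), ?_⟩
    intro n hn
    have hn0 : (N₀ : ℝ) ≤ (n : ℝ) := Nat.cast_le.2 (le_trans (le_max_left _ _) hn)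
    have hn1 : 1 ≤ n := le_trans (le_trans (le_max_right _ _) (le_max_right _ _)) hn
    have hnu : ‖u₀‖ ≤ (n : ℝ) :=
      le_trans (Nat.le_ceil _) (Nat.cast_le.2
        (le_trans (le_trans (le_max_left _ _) (le_max_right _ _)) hn))
    have hhalf : 1 / ((n : ℝ) + 1) ≤ ε / 2 := by
      have h2ε : 2 / ε < (n : ℝ) := lt_of_le_of_lt (le_max_right _ _) (lt_of_lt_of_le hN₀ hn0)
      rw [div_le_div_iff₀ (by positivity) (by positivity)]
      rw [div_lt_iff₀ hε] at h2ε
      nlinarith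
    have hone' : 1 / ((n : ℝ) + 1) ≤ 1 / 2 := by
      have : (1:ℝ) ≤ n := by exact_mod_cast hn1
      rw [div_le_div_iff₀ (by positivity) (by norm_num)]
      linarith
    rw [Real.dist_eq, abs_sub_lt_iff]
    constructor
    · -- a n k - h k < ε
      have h1 := hub k hkL u₀ n hnu
      linarith
    · -- h k - a n k < ε
      have hRn : R * ‖uk k‖ ≤ (n : ℝ) :=
        le_trans (le_trans (le_max_left _ _) (le_of_lt hN₀)) hn0
      have h2 := hlb k hkL R (le_of_lt hRpos) n hRn
      have h3 : h k ≤ g (-(R • uk k)) - R := by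
        have := hle (-(R • uk k))
        have hξ : ξ k (-(R • uk k)) = -R := by
          simp [map_neg, map_smul, smul_eq_mul, huk1 k]
        rw [hξ] at this
        linarith
      have h4 : h k - 1 / ((n:ℝ) + 1) < max (a n k) (-(R * δ k)) := by linarith
      have h5 : -(R * δ k) ≤ h k - 1 := by
        rw [hRδ]
        have := neg_abs_le (h k)
        linarith
      rcases max_cases (a n k) (-(R * δ k)) with ⟨hm, _⟩ | ⟨hm, hm'⟩
      · rw [hm] at h4; linarith
      · rw [hm] at h4
        exfalso
        linarith
  -- L' is nonempty
  have hL'ne : L'.Nonempty := by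
    rw [Finset.nonempty_iff_ne_empty]
    intro hemp
    have hall : ∀ᶠ n in atTop, ∀ j ∈ L, a n j ≤ -1 := by
      rw [Finset.eventually_all]
      intro j hj
      have hj' : j ∉ L' := by rw [hemp]; exact Finset.notMem_empty j
      exact (hbotL j hj hj').eventually (eventually_le_atBot (-1))
    obtain ⟨n, hn⟩ := hall.exists
    have := Finset.sup'_le hLne (a n) hn
    rw [hsup0 n] at this
    linarith
  -- eventually the sup over L' of a n is 0
  have hev0 : ∀ᶠ n in atTop, L'.sup' hL'ne (a n) = 0 := by
    have hallneg : ∀ᶠ n in atTop, ∀ j ∈ L \ L', a n j ≤ -1 := by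
      rw [Finset.eventually_all]
      intro j hj
      rw [Finset.mem_sdiff] at hj
      exact (hbotL j hj.1 hj.2).eventually (eventually_le_atBot (-1))
    filter_upwards [hallneg] with n hn
    obtain ⟨k₁, hk₁, hk₁eq⟩ := Finset.exists_mem_eq_sup' hLne (a n)
    have hk₁0 : a n k₁ = 0 := by rw [← hk₁eq]; exact hsup0 n
    have hk₁L' : k₁ ∈ L' := by
      by_contra hc
      have := hn k₁ (Finset.mem_sdiff.2 ⟨hk₁, hc⟩)
      linarith
    refine le_antisymm (Finset.sup'_le _ _ fun k hk => hanonpos n k (hsub hk)) ?_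
    rw [← hk₁0]
    exact Finset.le_sup' (a n) hk₁L'
  have hsuph : L'.sup' hL'ne h = 0 := by
    have t1 : Tendsto (fun n => L'.sup' hL'ne (a n)) atTop (𝓝 (L'.sup' hL'ne h)) :=
      tendsto_finset_sup' L' hL'ne a h htendL
    have t2 : Tendsto (fun n => L'.sup' hL'ne (a n)) atTop (𝓝 0) :=
      Tendsto.congr' (hev0.mono fun n hn => hn.symm)
        (tendsto_const_nhds : Tendsto (fun _ : ℕ => (0:ℝ)) atTop (𝓝 0))
    exact tendsto_nhds_unique t1 t2
  -- the formula for g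
  have hgu : ∀ u, g u = L'.sup' hL'ne (fun k => h k - ξ k u) := by
    intro u
    set cu : ℝ := L'.sup' hL'ne (fun k => h k - ξ k u) with hcu
    have t1 : Tendsto (fun n => L'.sup' hL'ne (fun k => a n k - ξ k u)) atTop (𝓝 cu) :=
      tendsto_finset_sup' L' hL'ne _ _ fun k hk => (htendL k hk).sub_const _
    have hev1 : ∀ᶠ n in atTop, L'.sup' hL'ne (fun k => a n k - ξ k u) > cu - 1 :=
      t1.eventually (eventually_gt_nhds (by linarith))
    have hev2 : ∀ᶠ n in atTop, ∀ j ∈ L \ L', a n j - ξ j u ≤ cu - 1 := by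
      rw [Finset.eventually_all]
      intro j hj
      rw [Finset.mem_sdiff] at hj
      have := (hbotL j hj.1 hj.2)
      have ht : Tendsto (fun n => a n j - ξ j u) atTop atBot := by
        simpa [sub_eq_add_neg] using this.atBot_add
          (tendsto_const_nhds : Tendsto (fun _ : ℕ => -(ξ j u)) atTop (𝓝 (-(ξ j u))))
      exact ht.eventually (eventually_le_atBot (cu - 1))
    have hev3 : ∀ᶠ n in atTop, fL n u = L'.sup' hL'ne (fun k => a n k - ξ k u) := by
      filter_upwards [hev1, hev2] with n h1 h2
      rw [hfLval]
      refine le_antisymm (Finset.sup'_le _ _ fun l hl => ?_)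
        (Finset.sup'_mono _ hsub hL'ne)
      by_cases hlL' : l ∈ L'
      · exact Finset.le_sup' (fun k => a n k - ξ k u) hlL'
      · exact le_trans (h2 l (Finset.mem_sdiff.2 ⟨hl, hlL'⟩)) (le_of_lt h1)
    have t2 : Tendsto (fun n => fL n u) atTop (𝓝 cu) :=
      Tendsto.congr' (hev3.mono fun n hn => hn.symm) t1
    exact tendsto_nhds_unique (hptw u) t2
  -- construct q
  set ψ : V →ₗ[ℝ] (Fin (m + 1) → ℝ) :=
    LinearMap.pi (fun k => if k ∈ L' then ξ k else 0) with hψdef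
  set r : ℕ → V := fun n => p n - (nuL ξ L (p n)) • vL with hrdef
  have hrval : ∀ n, ∀ k ∈ L, ξ k (r n) = a n k := fun n k hk => hrval0 n k hk
  set h' : Fin (m + 1) → ℝ := fun k => if k ∈ L' then h k else 0 with hh'def
  have hψr : Tendsto (fun n => ψ (r n)) atTop (𝓝 h') := by
    rw [tendsto_pi_nhds]
    intro k
    by_cases hk : k ∈ L'
    · have heq : (fun n => ψ (r n) k) = fun n => a n k := by
        funext n
        simp only [hψdef, LinearMap.pi_apply, if_pos hk]
        exact hrval n k (hsub hk)
      rw [heq, hh'def]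
      simp only [if_pos hk]
      exact htendL k hk
    · have heq : (fun n => ψ (r n) k) = fun n => (0:ℝ) := by
        funext n; simp [hψdef, LinearMap.pi_apply, if_neg hk]
      rw [heq, hh'def]
      simp only [if_neg hk]
      exact tendsto_const_nhds
  have hclosed : IsClosed ((LinearMap.range ψ : Submodule ℝ _) : Set (Fin (m + 1) → ℝ)) :=
    Submodule.closed_of_finiteDimensional _
  have hmem : h' ∈ LinearMap.range ψ :=
    hclosed.mem_of_tendsto hψr (Eventually.of_forall fun n => ⟨r n, rfl⟩)
  obtain ⟨q, hq⟩ := hmem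
  have hqval : ∀ k ∈ L', ξ k q = h k := by
    intro k hk
    have := congrFun hq k
    simpa [hψdef, LinearMap.pi_apply, if_pos hk, hh'def] using this
  -- dual face
  have hbdd' : ∀ k ∈ L', Tendsto (fun n => ξ k (r n)) atTop (𝓝 (h k)) := by
    intro k hk
    have heq : (fun n => ξ k (r n)) = fun n => a n k := by
      funext n; exact hrval n k (hsub hk)
    rw [heq]; exact htendL k hk
  have hneg' : ∀ j ∈ L, j ∉ L' → ∀ n, ξ j (r n) ≤ 0 := by
    intro j hj hj' n
    rw [hrval n j hj]
    exact hanonpos n j hj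
  have hbot' : ∀ j ∈ L, j ∉ L' → Tendsto (fun n => ξ j (r n)) atTop atBot := by
    intro j hj hj'
    have heq : (fun n => ξ j (r n)) = fun n => a n j := by
      funext n; exact hrval n j hj
    rw [heq]; exact hbotL j hj hj'
  obtain ⟨w, hw0, hwneg⟩ := exists_sep ξ L L' hsub r h hbdd' hneg' hbot'
  have hface : IsDualFace ξ L' := isDualFace_of_sep ξ hsub hL'ne vL hvL hvLiff w hw0 hwneg
  refine ⟨L', q, hface, hsub, ?_⟩
  funext u
  have h1 : nuL ξ L' (q - u) = g u := by
    rw [nuL_eq ξ hL'ne, hgu u]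
    refine Finset.sup'_congr hL'ne rfl fun k hk => ?_
    rw [map_sub, hqval k hk]
  have h2 : nuL ξ L' q = 0 := by
    rw [nuL_eq ξ hL'ne, ← hsuph]
    exact Finset.sup'_congr hL'ne rfl fun k hk => hqval k hk
  rw [h1, h2, sub_zero]


end Aux

/-- Let `L ⊆ K` be a dual face. The closure of
`{u ↦ ν_L(p−u) − ν_L(p) : p ∈ V}` in the topology of uniform convergence on bounded subsets
of `V` is the union, over all dual faces `L' ⊆ L`, of the sets
`{u ↦ ν_{L'}(p−u) − ν_{L'}(p) : p ∈ V}`. -/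
theorem closure_of_stratum
    {V : Type*} [NormedAddCommGroup V] [InnerProductSpace ℝ V] [FiniteDimensional ℝ V]
    {m : ℕ} (ξ : Fin (m + 1) → V →ₗ[ℝ] ℝ)
    (hfacet : ∀ k, ∃ u : V, ξ k u = 1 ∧ ∀ l, l ≠ k → ξ l u < 1)
    (hpos : ∀ u : V, u ≠ 0 → 0 < nu ξ u)
    (L : Finset (Fin (m + 1))) (hL : IsDualFace ξ L) :
    closure (UniformOnFun.ofFun {s : Set V | IsBounded s} ''
        {f : V → ℝ | ∃ p : V, f = fun u => nuL ξ L (p - u) - nuL ξ L p})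
      = UniformOnFun.ofFun {s : Set V | IsBounded s} ''
        {f : V → ℝ | ∃ L' : Finset (Fin (m + 1)), ∃ p : V,
          IsDualFace ξ L' ∧ L' ⊆ L ∧ f = fun u => nuL ξ L' (p - u) - nuL ξ L' p} := by
  classical
  obtain ⟨vL, hvL, hvLiff⟩ := hL
  have hLne : L.Nonempty := by
    obtain ⟨k, _, hkeq⟩ := Finset.exists_mem_eq_sup'
      (Finset.univ_nonempty (α := Fin (m + 1))) (fun k => ξ k vL)
    exact ⟨k, (hvLiff k).2 (by rw [← hkeq]; exact hvL)⟩
  apply Set.eq_of_subset_of_subset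
  · -- closure ⊆ union of strata
    intro F hF
    set g : V → ℝ := UniformOnFun.toFun _ F with hgdef
    have hFg : UniformOnFun.ofFun {s : Set V | IsBounded s} g = F := rfl
    rw [← hFg] at hF
    rw [memClosureUOF] at hF
    have hch : ∀ n : ℕ, ∃ p : V, ∀ u : V, ‖u‖ ≤ (n : ℝ) →
        |(nuL ξ L (p - u) - nuL ξ L p) - g u| < 1 / ((n : ℝ) + 1) := by
      intro n
      obtain ⟨f, ⟨p, rfl⟩, hf⟩ := hF (Metric.closedBall 0 n)
        Metric.isBounded_closedBall (1 / ((n : ℝ) + 1)) (by positivity)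
      refine ⟨p, fun u hu => ?_⟩
      have hu' : u ∈ Metric.closedBall (0 : V) n := by
        rw [Metric.mem_closedBall, dist_zero_right]; exact hu
      simpa using hf u hu'
    choose p hp using hch
    obtain ⟨L', q, hface, hsub', hgeq⟩ :=
      limit_structure ξ hfacet L vL hvL hvLiff g p (fun n u hu => hp n u hu)
    exact ⟨g, ⟨L', q, hface, hsub', hgeq⟩, hFg⟩
  · -- union of strata ⊆ closure
    rintro F ⟨f, ⟨L', q, hface, hsub', rfl⟩, rfl⟩
    rw [memClosureUOF]
    intro s hs ε hε
    obtain ⟨v', hv'nu, hv'iff⟩ := hface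
    have hL'ne : L'.Nonempty := by
      obtain ⟨k, _, hkeq⟩ := Finset.exists_mem_eq_sup'
        (Finset.univ_nonempty (α := Fin (m + 1))) (fun k => ξ k v')
      exact ⟨k, (hv'iff k).2 (by rw [← hkeq]; exact hv'nu)⟩
    have hv'le1 : ∀ k, ξ k v' ≤ 1 := by
      intro k
      have h := Finset.le_sup' (fun k => ξ k v') (Finset.mem_univ k)
      have h2 : nu ξ v' = Finset.univ.sup' Finset.univ_nonempty fun k => ξ k v' := rfl
      rw [h2] at hv'nu
      simpa [hv'nu] using h
    have hv'1 : ∀ k ∈ L', ξ k v' = 1 := fun k hk => (hv'iff k).1 hk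
    have hv'lt : ∀ k ∈ L, k ∉ L' → ξ k v' < 1 := fun k _ hk' =>
      lt_of_le_of_ne (hv'le1 k) (fun h => hk' ((hv'iff k).2 h))
    obtain ⟨q', hq'⟩ := shift_lemma ξ hL'ne hsub' v' hv'1 hv'lt q hs
    refine ⟨fun u => nuL ξ L (q' - u) - nuL ξ L q', ⟨q', rfl⟩, fun x hx => ?_⟩
    have h1 := hq' x (Set.mem_insert_of_mem _ hx)
    have h0 := hq' 0 (Set.mem_insert _ _)
    rw [sub_zero, sub_zero] at h0
    have : nuL ξ L (q' - x) - nuL ξ L q' - (nuL ξ L' (q - x) - nuL ξ L' q) = 0 := by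
      rw [h1, h0]; ring
    rw [this, abs_zero]
    exact hε
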